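/- Let G be symmetric positive definite and let a* minimize f(a) = aᵀGa over nonzero integer vectors. Fix j, and suppose a* has at least one nonzero coordinate other than j. Then |a*_j − r_j| ≤ 1/2, where r_j = (Σ_{i≠j} (−G_{ij}) a*_i)/G_{jj} is the real minimizer of f in the j-th coordinate keeping the others fixed. -/

import Mathlib

open Matrix BigOperators

theorem stmt8 {n : ℕ} (G : Matrix (Fin n) (Fin n) ℝ) (hG : G.PosDef)
    (a : Fin n → ℤ) (ha : a ≠ 0)
    (hmin : ∀ b : Fin n → ℤ, b ≠ 0 →
      (fun i => (a i : ℝ)) ⬝ᵥ G.mulVec (fun i => (a i : ℝ)) ≤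
      (fun i => (b i : ℝ)) ⬝ᵥ G.mulVec (fun i => (b i : ℝ)))
    (j : Fin n) (hne : ∃ i, i ≠ j ∧ a i ≠ 0)
    (r : ℝ)
    (hr : r = -(∑ i ∈ Finset.univ.erase j, G j i * (a i : ℝ)) / G j j) :
    |(a j : ℝ) - r| ≤ 1 / 2 := by
  obtain ⟨i0, hi0j, hi0⟩ := hne
  have hsym : ∀ p q, G p q = G q p := fun p q => by
    have := hG.1
    rw [Matrix.IsHermitian] at this
    calc G p q = Gᴴ p q := by rw [this]
    _ = G q p := by simp [Matrix.conjTranspose_apply]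
  -- diagonal positive
  have hGjj : 0 < G j j := by
    exact hG.diag_pos
  set u : Fin n → ℝ := fun i => (a i : ℝ) with hu
  set S : ℝ := ∑ i ∈ Finset.univ.erase j, G j i * (a i : ℝ) with hS
  have hmv : G.mulVec u j = G j j * (a j : ℝ) + S := by
    rw [hS]
    simp only [Matrix.mulVec, dotProduct]
    rw [← Finset.sum_erase_add _ _ (Finset.mem_univ j)]
    ring
  have hrS : S = -(r * G j j) := by
    rw [hr]; field_simp
  -- expansion lemma
  set e : Fin n → ℝ := Pi.single j 1 with he
  have expand : ∀ c : ℝ,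
      (u + c • e) ⬝ᵥ G.mulVec (u + c • e)
      = u ⬝ᵥ G.mulVec u + 2*c*(G.mulVec u j) + c^2 * G j j := by
    intro c
    have h1 : e ⬝ᵥ G.mulVec u = G.mulVec u j := by
      simp [he, dotProduct, Pi.single_apply]
    have h2 : u ⬝ᵥ G.mulVec e = G.mulVec u j := by
      have hme : G.mulVec e = fun i => G i j := by
        funext i
        simp [he, Matrix.mulVec, dotProduct, Pi.single_apply, mul_ite]
      rw [hme]
      show (∑ i, u i * G i j) = ∑ i, G j i * u i
      exact Finset.sum_congr rfl fun i _ => by rw [hsym j i]; ring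
    have h3 : e ⬝ᵥ G.mulVec e = G j j := by
      simp [he, dotProduct, Matrix.mulVec, Pi.single_apply, Finset.sum_ite_eq',
        mul_ite]
    rw [Matrix.mulVec_add, Matrix.mulVec_smul, dotProduct_add,
      add_dotProduct, add_dotProduct, dotProduct_smul,
      smul_dotProduct, smul_dotProduct, dotProduct_smul,
      h1, h2, h3]
    simp [smul_eq_mul]; ring
  -- key inequality for t = ±1
  have key : ∀ t : ℤ, t ≠ 0 →
      0 ≤ 2*(t:ℝ)*(G j j * ((a j : ℝ) - r)) + (t:ℝ)^2 * G j j := by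
    intro t ht
    set b : Fin n → ℤ := Function.update a j (a j + t) with hb
    have hbne : b ≠ 0 := by
      intro h
      apply hi0
      have := congrFun h i0
      rwa [hb, Function.update_of_ne hi0j] at this
    have hbu : (fun i => ((b i : ℝ))) = u + (t:ℝ) • e := by
      funext i
      by_cases hij : i = j
      · subst hij; simp [hb, he, hu, Function.update_self, Pi.single_apply]
      · simp [hb, he, hu, Function.update_of_ne hij, Pi.single_apply, hij]
    have := hmin b hbne
    rw [hbu, expand] at this
    have hmvr : G.mulVec u j = G j j * ((a j : ℝ) - r) := by
      rw [hmv, hrS]; ring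
    rw [hmvr] at this
    linarith
  have k1 := key 1 one_ne_zero
  have k2 := key (-1) (by norm_num)
  push_cast at k1 k2
  rw [abs_le]
  constructor <;> nlinarith [hGjj]
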